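/- Let K = 3, B¹ₓ = 0, B²ₓ = 1, and let 𝒞 be the collection of all eight constraints of the form −z₁ − z₂ − z₃ ≤ −7/4, where each z_k is either y_k or 1 − y_k. Then 𝒞 satisfies Condition 𝒜, and 𝒞 satisfies Condition ℬ with l = 2 and ν = 1/4: for every cube I = Π_{k=1}^3 [i_k/2, (i_k+1)/2] with i_k ∈ {0,1}, there is a constraint in 𝒞 whose left-hand side minus right-hand side is at least 1/4 at every point of I. -/
import Mathlib


noncomputable section

/-- Condition 𝒜 for a family of linear constraints `Σ_k A r k * y k ≤ bv r`, `r : ι`, on the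
box `[B1, B2]^K`: for every constraint, every coordinate `k`, and every `z ∈ [B1, B2]`, there
are `y₁,…,y_K ∈ [B1, B2]` with `y_k = z` satisfying the constraint. -/
def ConditionA {K : ℕ} {ι : Type*} (A : ι → Fin K → ℝ) (bv : ι → ℝ) (B1 B2 : ℝ) : Prop :=
  ∀ r : ι, ∀ k : Fin K, ∀ z ∈ Set.Icc B1 B2,
    ∃ y : Fin K → ℝ, (∀ k', y k' ∈ Set.Icc B1 B2) ∧ y k = z ∧
      ∑ k', A r k' * y k' ≤ bv r

/-- Condition ℬ with explicit parameters `l` and `ν`: for every `K`-dimensional cube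
`I = Π_k [t_k/l, (t_k+1)/l]` with `t_k` integer and `B1 ≤ t_k/l < B2`, some constraint
`r` satisfies `Σ_k A r k * y k − bv r ≥ ν` for every `y ∈ I`. -/
def ConditionBWith {K : ℕ} {ι : Type*} (A : ι → Fin K → ℝ) (bv : ι → ℝ) (B1 B2 : ℝ)
    (l : ℕ) (ν : ℝ) : Prop :=
  0 < l ∧ 0 < ν ∧
    ∀ t : Fin K → ℤ, (∀ k, B1 ≤ (t k : ℝ) / l ∧ (t k : ℝ) / l < B2) →
      ∃ r : ι, ∀ y : Fin K → ℝ,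
        (∀ k, y k ∈ Set.Icc ((t k : ℝ) / l) (((t k : ℝ) + 1) / l)) →
        ν ≤ ∑ k, A r k * y k - bv r

/-- The eight constraints `−z₁ − z₂ − z₃ ≤ −7/4`, where each `z_k` is either `y_k`
(when `σ k = true`) or `1 − y_k` (when `σ k = false`), written in the form
`Σ_k A σ k * y_k ≤ bv σ`: the coefficient of `y_k` is `−1` if `z_k = y_k` and `+1` if
`z_k = 1 − y_k`. -/
def exampleA : (Fin 3 → Bool) → Fin 3 → ℝ := fun σ k => if σ k then -1 else 1

/-- The right-hand sides of the eight constraints: `−7/4` plus the number of coordinates with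
`z_k = 1 − y_k`. -/
def exampleB : (Fin 3 → Bool) → ℝ := fun σ =>
  -(7 / 4) + ((Finset.univ.filter (fun k : Fin 3 => σ k = false)).card : ℝ)


lemma exampleB_eq (σ : Fin 3 → Bool) : exampleB σ =
    -(7/4) + ((if σ 0 = false then (1:ℝ) else 0) + (if σ 1 = false then 1 else 0)
      + (if σ 2 = false then 1 else 0)) := by
  simp only [exampleB, Finset.card_filter, Fin.sum_univ_three]
  push_cast [apply_ite]
  split_ifs <;> ring

lemma exampleCondA : ConditionA exampleA exampleB 0 1 := by
  intro σ k z hz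
  refine ⟨fun j => if j = k then z else if σ j then 1 else 0, ?_, by simp, ?_⟩
  · intro j; dsimp only; split_ifs <;> simp [hz.1, hz.2]
  · obtain ⟨hz0, hz1⟩ := hz
    rw [exampleB_eq, Fin.sum_univ_three]
    simp only [exampleA]
    fin_cases k <;>
      cases h0 : σ 0 <;> cases h1 : σ 1 <;> cases h2 : σ 2 <;>
      simp [h0, h1, h2] <;> linarith

lemma exampleCondB : ConditionBWith exampleA exampleB 0 1 2 (1 / 4) := by
  refine ⟨two_pos, by norm_num, ?_⟩
  intro t ht
  push_cast at ht ⊢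
  have htk : ∀ k, t k = 0 ∨ t k = 1 := by
    intro k
    have h1 := (ht k).1; have h2 := (ht k).2
    have : (0:ℝ) ≤ (t k : ℝ) ∧ (t k : ℝ) < 2 := by constructor <;> linarith
    have : (0:ℤ) ≤ t k ∧ t k < 2 := by exact_mod_cast this
    omega
  refine ⟨fun k => decide (t k = 0), ?_⟩
  intro y hy
  rw [exampleB_eq, Fin.sum_univ_three]
  simp only [exampleA]
  have hb : ∀ k, (-(1:ℝ)/2) ≤ (if decide (t k = 0) then (-1:ℝ) else 1) * y k
      - (if decide (t k = 0) = false then (1:ℝ) else 0) := by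
    intro k
    obtain ⟨hl, hr⟩ := hy k
    rcases htk k with h | h <;> simp [h] at hl hr ⊢ <;> linarith
  have h0 := hb 0; have h1 := hb 1; have h2 := hb 2
  linarith

/-- **The example family satisfies Condition 𝒜, and Condition ℬ with `l = 2`, `ν = 1/4`.** -/
theorem example_satisfies_conditions :
    ConditionA exampleA exampleB 0 1 ∧
    ConditionBWith exampleA exampleB 0 1 2 (1 / 4) := by
  exact ⟨exampleCondA, exampleCondB⟩
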